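/- Let ρ : Cl(V ⊕ W) → End_ℂ(F) be the algebra homomorphism with ρ(ι(v_a ⊕ 0)) = v_a and ρ(ι(0 ⊕ w_a)) = w_a for all a ∈ H. The kernel of the ℂ-linear map Cl(V ⊕ W) → F, x ↦ ρ(x)(|0⟩), equals the left ideal of Cl(V ⊕ W) generated by the elements ι(v_i ⊕ 0) for i ∈ H⁻ and ι(0 ⊕ w_j) for j ∈ H⁺; consequently F is isomorphic as a Cl(V ⊕ W)-module to the module induced from the trivial one-dimensional module of the subalgebra Cl⁺(V ⊕ W) generated by {v_i : i ∈ H⁻} ∪ {w_j : j ∈ H⁺}. -/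

import Mathlib

open scoped Classical

/-- The set of half-integers `H = ℤ + 1/2`. -/
def HalfInt : Set ℚ := {q | ∃ n : ℤ, q = (n : ℚ) + 1/2}

/-- The negative half-integers `H⁻`. -/
def Hneg : Set ℚ := {q | q ∈ HalfInt ∧ q < 0}

/-- The positive half-integers `H⁺`. -/
def Hpos : Set ℚ := {q | q ∈ HalfInt ∧ 0 < q}

/-- A Maya diagram: a set of half-integers whose symmetric difference with `H⁻` is finite. -/
structure Maya where
  carrier : Set ℚ
  subset_halfInt : carrier ⊆ HalfInt
  finite_symmDiff : (symmDiff carrier Hneg).Finite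

/-- The Fock space of semi-infinite forms: the free ℂ-vector space on Maya diagrams. -/
abbrev Fock : Type := Maya →₀ ℂ

lemma symmDiff_insert_subset (a : ℚ) (S T : Set ℚ) :
    symmDiff (insert a S) T ⊆ insert a (symmDiff S T) := by
  intro x hx
  simp only [Set.mem_symmDiff, Set.mem_insert_iff] at *
  tauto

lemma symmDiff_diff_subset (a : ℚ) (S T : Set ℚ) :
    symmDiff (S \ {a}) T ⊆ insert a (symmDiff S T) := by
  intro x hx
  simp only [Set.mem_symmDiff, Set.mem_insert_iff, Set.mem_diff,
    Set.mem_singleton_iff] at *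
  tauto

/-- Adding a half-integer to a Maya diagram. -/
def Maya.insertCell (M : Maya) (a : ℚ) (ha : a ∈ HalfInt) : Maya where
  carrier := insert a M.carrier
  subset_halfInt := by
    intro x hx
    rcases hx with rfl | hx
    · exact ha
    · exact M.subset_halfInt hx
  finite_symmDiff :=
    Set.Finite.subset (M.finite_symmDiff.insert a) (symmDiff_insert_subset a _ _)

/-- Removing a half-integer from a Maya diagram. -/
def Maya.eraseCell (M : Maya) (a : ℚ) : Maya where
  carrier := M.carrier \ {a}
  subset_halfInt := fun _ hx => M.subset_halfInt hx.1
  finite_symmDiff :=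
    Set.Finite.subset (M.finite_symmDiff.insert a) (symmDiff_diff_subset a _ _)

/-- The sign `(-1)^{#{x ∈ S : x > a}}`. -/
noncomputable def sgn (S : Set ℚ) (a : ℚ) : ℂ := (-1) ^ (S ∩ Set.Ioi a).ncard

/-- The creation operator `v_a` (exterior multiplication by `v_a`). -/
noncomputable def creation (a : ↥HalfInt) : Fock →ₗ[ℂ] Fock :=
  Finsupp.lift Fock ℂ Maya fun M =>
    if (a : ℚ) ∈ M.carrier then 0
    else sgn M.carrier a • Finsupp.single (M.insertCell a a.2) 1

/-- The annihilation operator `w_a` (contraction by `w_a`). -/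
noncomputable def annihilation (a : ↥HalfInt) : Fock →ₗ[ℂ] Fock :=
  Finsupp.lift Fock ℂ Maya fun M =>
    if (a : ℚ) ∈ M.carrier then sgn M.carrier a • Finsupp.single (M.eraseCell a) 1
    else 0

/-- The Maya diagram `H⁻` of the vacuum. -/
def mayaVac : Maya where
  carrier := Hneg
  subset_halfInt := fun _ hx => hx.1
  finite_symmDiff := by
    simp only [symmDiff_self]
    exact Set.finite_empty

/-- The vacuum vector `|0⟩ = e_{H⁻} = v_{−1/2} ∧ v_{−3/2} ∧ ⋯`. -/
noncomputable def vacuum : Fock := Finsupp.single mayaVac 1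

/-- The vector space `V`, free on basis `(v_a)_{a ∈ H}`. -/
abbrev Vsp : Type := ↥HalfInt →₀ ℂ

/-- The vector space `W`, free on basis `(w_a)_{a ∈ H}`. -/
abbrev Wsp : Type := ↥HalfInt →₀ ℂ

/-- The pairing `(v, w) = Σ_a x_a y_a` between `V` and `W`. -/
noncomputable def pairVW : Vsp →ₗ[ℂ] Wsp →ₗ[ℂ] ℂ :=
  Finsupp.lsum ℂ fun a => LinearMap.smulRight (LinearMap.id : ℂ →ₗ[ℂ] ℂ) (Finsupp.lapply a)

/-- The bilinear map `B((x,y),(x',y')) = Σ_a x_a y'_a` on `V ⊕ W`. -/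
noncomputable def bilinVW : (Vsp × Wsp) →ₗ[ℂ] (Vsp × Wsp) →ₗ[ℂ] ℂ :=
  (pairVW.comp (LinearMap.fst ℂ Vsp Wsp)).compl₂ (LinearMap.snd ℂ Vsp Wsp)

/-- The quadratic form `Q(x ⊕ y) = Σ_a x_a y_a` on `V ⊕ W`, so that in
`CliffordAlgebra Qform` the relations `v v' + v' v = 0`, `w w' + w' w = 0`,
`v w + w v = (v,w)·1` hold. -/
noncomputable def Qform : QuadraticForm ℂ (Vsp × Wsp) :=
  LinearMap.BilinMap.toQuadraticMap bilinVW

/-- The "act on the vacuum" linear map `x ↦ ρ(x)|0⟩`. -/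
noncomputable def actVac (ρ : CliffordAlgebra Qform →ₐ[ℂ] Module.End ℂ Fock) :
    CliffordAlgebra Qform →ₗ[ℂ] Fock :=
  (LinearMap.applyₗ vacuum).comp ρ.toLinearMap

noncomputable def Vg (a : ↥HalfInt) : CliffordAlgebra Qform :=
  CliffordAlgebra.ι Qform (Finsupp.single a 1, 0)

noncomputable def Wg (a : ↥HalfInt) : CliffordAlgebra Qform :=
  CliffordAlgebra.ι Qform (0, Finsupp.single a 1)

lemma bilinVW_apply (x x' : Vsp) (y y' : Wsp) :
    bilinVW (x, y) (x', y') = pairVW x y' := rfl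

lemma pairVW_single (a b : ↥HalfInt) (c d : ℂ) :
    pairVW (Finsupp.single a c) (Finsupp.single b d) = if a = b then c * d else 0 := by
  simp only [pairVW, Finsupp.lsum_single, LinearMap.smulRight_apply, LinearMap.id_apply,
    LinearMap.smul_apply, Finsupp.lapply_apply, Finsupp.single_apply, smul_eq_mul]
  split
  · simp [*]
  · simp [if_neg (Ne.symm ‹_›)]

lemma polar_Qform (m m' : Vsp × Wsp) :
    QuadraticMap.polar Qform m m' = bilinVW m m' + bilinVW m' m :=
  LinearMap.BilinMap.polar_toQuadraticMap m m'

lemma Vg_mul_Vg (a b : ↥HalfInt) : Vg a * Vg b = -(Vg b * Vg a) := by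
  have h := CliffordAlgebra.ι_mul_ι_add_swap (Q := Qform)
    (Finsupp.single a 1, 0) (Finsupp.single b 1, 0)
  rw [polar_Qform] at h
  simp only [bilinVW_apply, map_zero, LinearMap.zero_apply, add_zero] at h
  exact eq_neg_of_add_eq_zero_left h

lemma Wg_mul_Wg (a b : ↥HalfInt) : Wg a * Wg b = -(Wg b * Wg a) := by
  have h := CliffordAlgebra.ι_mul_ι_add_swap (Q := Qform)
    (0, Finsupp.single a 1) (0, Finsupp.single b 1)
  rw [polar_Qform] at h
  simp only [bilinVW_apply, map_zero, LinearMap.zero_apply, add_zero] at h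
  exact eq_neg_of_add_eq_zero_left h

lemma Vg_mul_Wg (a b : ↥HalfInt) :
    Vg a * Wg b = (if a = b then (1:ℂ) else 0) • (1 : CliffordAlgebra Qform)
      - Wg b * Vg a := by
  have h := CliffordAlgebra.ι_mul_ι_add_swap (Q := Qform)
    (Finsupp.single a 1, 0) (0, Finsupp.single b 1)
  rw [polar_Qform] at h
  simp only [bilinVW_apply, map_zero, LinearMap.zero_apply, add_zero, pairVW_single,
    mul_one, Algebra.algebraMap_eq_smul_one] at h
  exact eq_sub_of_add_eq h
abbrev Cl : Type _ := CliffordAlgebra Qform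

noncomputable def prodOf (f : ↥HalfInt → Cl) (L : List ↥HalfInt) : Cl := (L.map f).prod

lemma prodOf_nil (f : ↥HalfInt → Cl) : prodOf f [] = 1 := rfl

lemma prodOf_cons (f : ↥HalfInt → Cl) (a : ↥HalfInt) (L : List ↥HalfInt) :
    prodOf f (a :: L) = f a * prodOf f L := by simp [prodOf]

section anticomm
variable {f : ↥HalfInt → Cl} (hf : ∀ a b, f a * f b = -(f b * f a))

include hf

lemma sq_zero (a : ↥HalfInt) : f a * f a = 0 := by
  have h := hf a a
  have h2 : (2:ℂ) • (f a * f a) = 0 := by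
    rw [two_smul]
    nth_rewrite 2 [h]
    rw [add_neg_cancel]
  rcases smul_eq_zero.mp h2 with h3 | h3
  · exact absurd h3 two_ne_zero
  · exact h3

lemma mul_prodOf_swap (L : List ↥HalfInt) (a : ↥HalfInt) :
    f a * prodOf f L = ((-1:ℂ)^L.length) • (prodOf f L * f a) := by
  induction L with
  | nil => simp [prodOf_nil]
  | cons b L ih =>
    rw [prodOf_cons, ← mul_assoc, hf a b, neg_mul, mul_assoc, ih]
    rw [mul_smul_comm, ← neg_smul, ← mul_assoc, List.length_cons, pow_succ, mul_neg_one]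

lemma mul_prodOf_eq_zero (L : List ↥HalfInt) (a : ↥HalfInt) (h : a ∈ L) :
    f a * prodOf f L = 0 := by
  induction L with
  | nil => exact absurd h List.not_mem_nil
  | cons b L ih =>
    rcases List.mem_cons.mp h with rfl | h'
    · rw [prodOf_cons, ← mul_assoc, sq_zero hf, zero_mul]
    · rw [prodOf_cons, ← mul_assoc, hf a b, neg_mul, mul_assoc, ih h', mul_zero, neg_zero]

lemma prodOf_eq_zero_of_not_nodup (L : List ↥HalfInt) (h : ¬ L.Nodup) : prodOf f L = 0 := by
  induction L with
  | nil => exact absurd List.nodup_nil h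
  | cons a L ih =>
    rw [List.nodup_cons] at h
    push_neg at h
    rw [prodOf_cons]
    by_cases ha : a ∈ L
    · exact mul_prodOf_eq_zero hf L a ha
    · rw [ih (h ha), mul_zero]

lemma prodOf_perm {L L' : List ↥HalfInt} (h : L.Perm L') :
    ∃ c : ℂ, prodOf f L = c • prodOf f L' := by
  induction h with
  | nil => exact ⟨1, (one_smul _ _).symm⟩
  | cons x _ ih =>
    obtain ⟨c, hc⟩ := ih
    exact ⟨c, by rw [prodOf_cons, prodOf_cons, hc, mul_smul_comm]⟩
  | swap x y l =>
    refine ⟨-1, ?_⟩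
    rw [prodOf_cons, prodOf_cons, prodOf_cons, prodOf_cons, ← mul_assoc, ← mul_assoc,
      hf y x, neg_mul, neg_smul, one_smul]
  | trans _ _ ih1 ih2 =>
    obtain ⟨c, hc⟩ := ih1
    obtain ⟨d, hd⟩ := ih2
    exact ⟨c * d, by rw [hc, hd, smul_smul]⟩

end anticomm
lemma mul_mem_span_of_forall {S : Set Cl} {y x : Cl} (hx : x ∈ Submodule.span ℂ S)
    (hS : ∀ s ∈ S, y * s ∈ Submodule.span ℂ S) : y * x ∈ Submodule.span ℂ S := by
  induction hx using Submodule.span_induction with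
  | mem s hs => exact hS s hs
  | zero => simp
  | add a b _ _ ha hb => rw [mul_add]; exact add_mem ha hb
  | smul c a _ ha => rw [mul_smul_comm]; exact Submodule.smul_mem _ _ ha

noncomputable def spanProds (f : ↥HalfInt → Cl) (P : ↥HalfInt → Prop) : Submodule ℂ Cl :=
  Submodule.span ℂ {x | ∃ L : List ↥HalfInt, (∀ b ∈ L, P b) ∧ x = prodOf f L}

lemma mul_spanProds {f : ↥HalfInt → Cl} {P : ↥HalfInt → Prop} {a : ↥HalfInt} (hPa : P a)
    {x : Cl} (hx : x ∈ spanProds f P) : f a * x ∈ spanProds f P :=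
  mul_mem_span_of_forall hx (by
    rintro s ⟨L, hL, rfl⟩
    exact Submodule.subset_span ⟨a :: L, by
      refine ⟨?_, (prodOf_cons f a L).symm⟩
      intro b hb
      rcases List.mem_cons.mp hb with rfl | hb
      · exact hPa
      · exact hL b hb⟩)

lemma prodOf_mem_spanProds {f : ↥HalfInt → Cl} {P : ↥HalfInt → Prop} {L : List ↥HalfInt}
    (hL : ∀ b ∈ L, P b) : prodOf f L ∈ spanProds f P :=
  Submodule.subset_span ⟨L, hL, rfl⟩

section cross
variable {f g : ↥HalfInt → Cl} {P : ↥HalfInt → Prop}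
  (hgf : ∀ a b, g a * f b = (if a = b then (1:ℂ) else 0) • 1 - f b * g a)

include hgf

lemma cross_mem (L : List ↥HalfInt) (hL : ∀ b ∈ L, P b) (a : ↥HalfInt) :
    g a * prodOf f L - ((-1:ℂ)^L.length) • (prodOf f L * g a) ∈ spanProds f P := by
  induction L with
  | nil =>
    simp only [prodOf_nil, List.length_nil, pow_zero, one_smul, mul_one, one_mul, sub_self]
    exact Submodule.zero_mem _
  | cons b L ih =>
    have hb : P b := hL b List.mem_cons_self
    have hL' : ∀ c ∈ L, P c := fun c hc => hL c (List.mem_cons_of_mem b hc)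
    have key : g a * prodOf f (b :: L) - ((-1:ℂ)^(b :: L).length) • (prodOf f (b :: L) * g a)
        = (if a = b then (1:ℂ) else 0) • prodOf f L
          - f b * (g a * prodOf f L - ((-1:ℂ)^L.length) • (prodOf f L * g a)) := by
      simp only [prodOf_cons, List.length_cons, pow_succ, mul_neg_one, neg_smul, ← mul_assoc,
        hgf a b, sub_mul, smul_mul_assoc, one_mul, mul_sub, mul_smul_comm]
      abel
    rw [key]
    exact sub_mem (Submodule.smul_mem _ _ (prodOf_mem_spanProds hL'))
      (mul_spanProds hb (ih hL'))

end cross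
lemma sgn_ne_zero (S : Set ℚ) (a : ℚ) : sgn S a ≠ 0 := by
  simp only [sgn]
  exact pow_ne_zero _ (neg_ne_zero.mpr one_ne_zero)

lemma creation_single (a : ↥HalfInt) (M : Maya) :
    creation a (Finsupp.single M 1) =
      if (a : ℚ) ∈ M.carrier then 0
      else sgn M.carrier a • Finsupp.single (M.insertCell a a.2) 1 := by
  rw [creation, Finsupp.lift_apply, Finsupp.sum_single_index (by simp), one_smul]

lemma annihilation_single (a : ↥HalfInt) (M : Maya) :
    annihilation a (Finsupp.single M 1) =
      if (a : ℚ) ∈ M.carrier then sgn M.carrier a • Finsupp.single (M.eraseCell a) 1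
      else 0 := by
  rw [annihilation, Finsupp.lift_apply, Finsupp.sum_single_index (by simp), one_smul]

section chains
variable (ρ : CliffordAlgebra Qform →ₐ[ℂ] Module.End ℂ Fock)
  (hv : ∀ a : ↥HalfInt,
      ρ (CliffordAlgebra.ι Qform (Finsupp.single a 1, 0)) = creation a)
  (hw : ∀ a : ↥HalfInt,
      ρ (CliffordAlgebra.ι Qform (0, Finsupp.single a 1)) = annihilation a)

include hw in
lemma annih_chain (L : List ↥HalfInt) (hnd : L.Nodup) (N : Maya)
    (hmem : ∀ b ∈ L, (b : ℚ) ∈ N.carrier) :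
    ∃ c : ℂ, c ≠ 0 ∧ ∃ N' : Maya,
      N'.carrier = N.carrier \ {q : ℚ | ∃ b ∈ L, (b : ℚ) = q} ∧
      ρ (prodOf Wg L) (Finsupp.single N 1) = c • Finsupp.single N' 1 := by
  induction L with
  | nil =>
    refine ⟨1, one_ne_zero, N, ?_, ?_⟩
    · simp
    · rw [prodOf_nil, map_one, one_smul]; rfl
  | cons a L ih =>
    obtain ⟨c, hc, N', hN', hρ⟩ := ih (List.Nodup.of_cons hnd)
      (fun b hb => hmem b (List.mem_cons_of_mem a hb))
    have haN' : (a : ℚ) ∈ N'.carrier := by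
      rw [hN']
      refine ⟨hmem a List.mem_cons_self, ?_⟩
      rintro ⟨b, hb, hba⟩
      have : a = b := Subtype.ext hba.symm
      exact (List.nodup_cons.mp hnd).1 (this ▸ hb)
    refine ⟨c * sgn N'.carrier a, mul_ne_zero hc (sgn_ne_zero _ _), N'.eraseCell a, ?_, ?_⟩
    · show N'.carrier \ {(a : ℚ)} = _
      rw [hN']
      ext q
      simp only [Set.mem_diff, Set.mem_setOf_eq, Set.mem_singleton_iff, List.mem_cons]
      constructor
      · rintro ⟨⟨hq, h2⟩, h3⟩
        exact ⟨hq, by rintro ⟨b, rfl | hb, rfl⟩ <;> [exact h3 rfl; exact h2 ⟨b, hb, rfl⟩]⟩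
      · rintro ⟨hq, h2⟩
        exact ⟨⟨hq, fun ⟨b, hb, hbq⟩ => h2 ⟨b, Or.inr hb, hbq⟩⟩, fun h => h2 ⟨a, Or.inl rfl, h.symm⟩⟩
    · rw [prodOf_cons, map_mul]
      show ρ (Wg a) (ρ (prodOf Wg L) (Finsupp.single N 1)) = _
      rw [hρ, map_smul]
      have hwa : ρ (Wg a) = annihilation a := hw a
      rw [hwa, annihilation_single, if_pos haN', smul_smul]

include hv in
lemma create_chain (L : List ↥HalfInt) (hnd : L.Nodup) (N : Maya)
    (hmem : ∀ b ∈ L, (b : ℚ) ∉ N.carrier) :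
    ∃ c : ℂ, c ≠ 0 ∧ ∃ N' : Maya,
      N'.carrier = N.carrier ∪ {q : ℚ | ∃ b ∈ L, (b : ℚ) = q} ∧
      ρ (prodOf Vg L) (Finsupp.single N 1) = c • Finsupp.single N' 1 := by
  induction L with
  | nil =>
    refine ⟨1, one_ne_zero, N, ?_, ?_⟩
    · simp
    · rw [prodOf_nil, map_one, one_smul]; rfl
  | cons a L ih =>
    obtain ⟨c, hc, N', hN', hρ⟩ := ih (List.Nodup.of_cons hnd)
      (fun b hb => hmem b (List.mem_cons_of_mem a hb))
    have haN' : (a : ℚ) ∉ N'.carrier := by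
      rw [hN']
      rintro (h | ⟨b, hb, hba⟩)
      · exact hmem a List.mem_cons_self h
      · have : a = b := Subtype.ext hba.symm
        exact (List.nodup_cons.mp hnd).1 (this ▸ hb)
    refine ⟨c * sgn N'.carrier a, mul_ne_zero hc (sgn_ne_zero _ _), N'.insertCell a a.2, ?_, ?_⟩
    · show insert (a : ℚ) N'.carrier = _
      rw [hN']
      ext q
      simp only [Set.mem_insert_iff, Set.mem_union, Set.mem_setOf_eq, List.mem_cons]
      constructor
      · rintro (rfl | hq | ⟨b, hb, rfl⟩)
        · exact Or.inr ⟨a, Or.inl rfl, rfl⟩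
        · exact Or.inl hq
        · exact Or.inr ⟨b, Or.inr hb, rfl⟩
      · rintro (hq | ⟨b, rfl | hb, rfl⟩)
        · exact Or.inr (Or.inl hq)
        · exact Or.inl rfl
        · exact Or.inr (Or.inr ⟨b, hb, rfl⟩)
    · rw [prodOf_cons, map_mul]
      show ρ (Vg a) (ρ (prodOf Vg L) (Finsupp.single N 1)) = _
      rw [hρ, map_smul]
      have hva : ρ (Vg a) = creation a := hv a
      rw [hva, creation_single, if_neg haN', smul_smul]

end chains
/-- Index type for normal-ordered monomials. -/
def Sig : Type := {p : Finset ↥HalfInt × Finset ↥HalfInt //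
  (∀ a ∈ p.1, 0 < (a : ℚ)) ∧ (∀ b ∈ p.2, (b : ℚ) < 0)}

noncomputable def mono (p : Sig) : Cl :=
  prodOf Vg (p.1.1.sort (· ≤ ·)) * prodOf Wg (p.1.2.sort (· ≤ ·))

/-- The carrier of the Maya diagram associated to a monomial index. -/
def Mcar (p : Sig) : Set ℚ :=
  (Hneg \ (Subtype.val '' (p.1.2 : Set ↥HalfInt))) ∪ (Subtype.val '' (p.1.1 : Set ↥HalfInt))

lemma Mcar_inter_pos (p : Sig) : Mcar p ∩ {q : ℚ | 0 < q} = Subtype.val '' (p.1.1 : Set ↥HalfInt) := by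
  ext q
  simp only [Mcar, Set.mem_inter_iff, Set.mem_union, Set.mem_diff, Set.mem_setOf_eq]
  constructor
  · rintro ⟨hq | hq, hpos⟩
    · exact absurd hq.1.2 (not_lt.mpr hpos.le)
    · exact hq
  · rintro ⟨a, ha, rfl⟩
    exact ⟨Or.inr ⟨a, ha, rfl⟩, p.2.1 a ha⟩

lemma Hneg_diff_Mcar (p : Sig) : Hneg \ Mcar p = Subtype.val '' (p.1.2 : Set ↥HalfInt) := by
  ext q
  simp only [Mcar, Set.mem_diff, Set.mem_union, not_or, Set.mem_diff, not_and, not_not]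
  constructor
  · rintro ⟨hq, h1, h2⟩
    exact h1 hq
  · rintro ⟨b, hb, rfl⟩
    have hbneg : ((b : ℚ)) ∈ Hneg := ⟨b.2, p.2.2 b hb⟩
    refine ⟨hbneg, fun _ => ⟨b, hb, rfl⟩, fun hmem => ?_⟩
    obtain ⟨a, ha, hab⟩ := hmem
    have : (b : ℚ) < 0 := p.2.2 b hb
    have : (0 : ℚ) < (a : ℚ) := p.2.1 a ha
    linarith

lemma Mcar_injective : Function.Injective Mcar := by
  intro p q h
  have h1 : Subtype.val '' (p.1.1 : Set ↥HalfInt) = Subtype.val '' (q.1.1 : Set ↥HalfInt) := by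
    rw [← Mcar_inter_pos, ← Mcar_inter_pos, h]
  have h2 : Subtype.val '' (p.1.2 : Set ↥HalfInt) = Subtype.val '' (q.1.2 : Set ↥HalfInt) := by
    rw [← Hneg_diff_Mcar, ← Hneg_diff_Mcar, h]
  have e1 : p.1.1 = q.1.1 := Finset.coe_injective
    (Set.image_injective.mpr Subtype.val_injective h1)
  have e2 : p.1.2 = q.1.2 := Finset.coe_injective
    (Set.image_injective.mpr Subtype.val_injective h2)
  exact Subtype.ext (Prod.ext e1 e2)

lemma actVac_apply (ρ : CliffordAlgebra Qform →ₐ[ℂ] Module.End ℂ Fock) (x : CliffordAlgebra Qform) :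
    actVac ρ x = ρ x vacuum := rfl

section act
variable (ρ : CliffordAlgebra Qform →ₐ[ℂ] Module.End ℂ Fock)
  (hv : ∀ a : ↥HalfInt,
      ρ (CliffordAlgebra.ι Qform (Finsupp.single a 1, 0)) = creation a)
  (hw : ∀ a : ↥HalfInt,
      ρ (CliffordAlgebra.ι Qform (0, Finsupp.single a 1)) = annihilation a)

include hv hw in
lemma actVac_mono (p : Sig) :
    ∃ c : ℂ, c ≠ 0 ∧ ∃ N : Maya, N.carrier = Mcar p ∧
      actVac ρ (mono p) = c • Finsupp.single N 1 := by
  obtain ⟨c, hc, N1, hN1, hρ1⟩ := annih_chain ρ hw (p.1.2.sort (· ≤ ·))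
    (Finset.sort_nodup _ _) mayaVac
    (fun b hb => ⟨b.2, p.2.2 b (Finset.mem_sort (· ≤ ·) |>.mp hb)⟩)
  have hsetB : {q : ℚ | ∃ b ∈ p.1.2.sort (· ≤ ·), (b : ℚ) = q}
      = Subtype.val '' (p.1.2 : Set ↥HalfInt) := by
    ext q
    simp only [Set.mem_setOf_eq, Set.mem_image, Finset.mem_coe, Finset.mem_sort]
  have hN1c : N1.carrier = Hneg \ Subtype.val '' (p.1.2 : Set ↥HalfInt) := by
    rw [hN1, hsetB] <;> rfl
  obtain ⟨d, hd, N2, hN2, hρ2⟩ := create_chain ρ hv (p.1.1.sort (· ≤ ·))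
    (Finset.sort_nodup _ _) N1
    (fun a ha hmem => by
      rw [hN1c] at hmem
      have : (a : ℚ) < 0 := hmem.1.2
      have : (0 : ℚ) < (a : ℚ) := p.2.1 a (Finset.mem_sort (· ≤ ·) |>.mp ha)
      linarith)
  have hsetA : {q : ℚ | ∃ b ∈ p.1.1.sort (· ≤ ·), (b : ℚ) = q}
      = Subtype.val '' (p.1.1 : Set ↥HalfInt) := by
    ext q
    simp only [Set.mem_setOf_eq, Set.mem_image, Finset.mem_coe, Finset.mem_sort]
  refine ⟨d * c, mul_ne_zero hd hc, N2, ?_, ?_⟩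
  · rw [hN2, hN1c, hsetA] <;> rfl
  · rw [actVac_apply, mono, map_mul]
    show ρ (prodOf Vg _) (ρ (prodOf Wg _) vacuum) = _
    rw [vacuum, hρ1, map_smul, hρ2, smul_smul, mul_comm c d]

end act
lemma halfInt_ne_zero {q : ℚ} (h : q ∈ HalfInt) : q ≠ 0 := by
  obtain ⟨n, rfl⟩ := h
  intro h0
  have h2 : (2 * n : ℤ) = -1 := by
    have : (n : ℚ) = -(1/2) := by linarith
    have : ((2 * n : ℤ) : ℚ) = -1 := by push_cast; linarith
    exact_mod_cast this
  omega

lemma halfInt_pos_or_neg (a : ↥HalfInt) : 0 < (a : ℚ) ∨ (a : ℚ) < 0 := by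
  rcases lt_or_gt_of_ne (halfInt_ne_zero a.2) with h | h
  · exact Or.inr h
  · exact Or.inl h

lemma Wg_mul_Vg (a b : ↥HalfInt) :
    Wg a * Vg b = (if a = b then (1:ℂ) else 0) • (1 : Cl) - Vg b * Wg a := by
  have h := Vg_mul_Wg b a
  have h2 : Wg a * Vg b + Vg b * Wg a = (if b = a then (1:ℂ) else 0) • 1 := by
    rw [add_comm, ← eq_sub_iff_add_eq]
    exact h
  rw [show (if a = b then (1:ℂ) else 0) = (if b = a then (1:ℂ) else 0) from
    if_congr eq_comm rfl rfl]
  exact eq_sub_of_add_eq h2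

def Igen : Set Cl :=
  {x | ∃ i : ↥HalfInt, (i : ℚ) < 0 ∧ x = CliffordAlgebra.ι Qform (Finsupp.single i 1, 0)} ∪
  {x | ∃ j : ↥HalfInt, 0 < (j : ℚ) ∧ x = CliffordAlgebra.ι Qform (0, Finsupp.single j 1)}

noncomputable def Isub : Submodule Cl Cl := Submodule.span Cl Igen

noncomputable def Jsub : Submodule ℂ Cl :=
  Isub.restrictScalars ℂ ⊔ Submodule.span ℂ (Set.range mono)

lemma Vg_mem_Isub {a : ↥HalfInt} (ha : (a : ℚ) < 0) : Vg a ∈ Isub :=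
  Submodule.subset_span (Or.inl ⟨a, ha, rfl⟩)

lemma Wg_mem_Isub {a : ↥HalfInt} (ha : 0 < (a : ℚ)) : Wg a ∈ Isub :=
  Submodule.subset_span (Or.inr ⟨a, ha, rfl⟩)

lemma mul_mem_Isub {x : Cl} (y : Cl) (hx : x ∈ Isub) : y * x ∈ Isub :=
  Isub.smul_mem y hx

lemma Isub_le_Jsub {x : Cl} (hx : x ∈ Isub) : x ∈ Jsub :=
  Submodule.mem_sup_left (show x ∈ Isub.restrictScalars ℂ from hx)

lemma mono_mem_Jsub (p : Sig) : mono p ∈ Jsub :=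
  Submodule.mem_sup_right (Submodule.subset_span ⟨p, rfl⟩)

lemma mul_span_mem {S : Set Cl} {J' : Submodule ℂ Cl} {y x : Cl}
    (hx : x ∈ Submodule.span ℂ S) (h : ∀ s ∈ S, y * s ∈ J') : y * x ∈ J' := by
  induction hx using Submodule.span_induction with
  | mem s hs => exact h s hs
  | zero => simp
  | add a b _ _ ha hb => rw [mul_add]; exact add_mem ha hb
  | smul c a _ ha => rw [mul_smul_comm]; exact Submodule.smul_mem _ _ ha

lemma span_mul_mem {S : Set Cl} {J' : Submodule ℂ Cl} {y x : Cl}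
    (hx : x ∈ Submodule.span ℂ S) (h : ∀ s ∈ S, s * y ∈ J') : x * y ∈ J' := by
  induction hx using Submodule.span_induction with
  | mem s hs => exact h s hs
  | zero => simp
  | add a b _ _ ha hb => rw [add_mul]; exact add_mem ha hb
  | smul c a _ ha => rw [smul_mul_assoc]; exact Submodule.smul_mem _ _ ha

/-- Normalization: any positive-V-list times negative-W-list product lies in `Jsub`. -/
lemma normK (A B : List ↥HalfInt) (hA : ∀ a ∈ A, 0 < (a : ℚ)) (hB : ∀ b ∈ B, (b : ℚ) < 0) :
    prodOf Vg A * prodOf Wg B ∈ Jsub := by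
  by_cases hnA : A.Nodup
  · by_cases hnB : B.Nodup
    · set p : Sig := ⟨(A.toFinset, B.toFinset),
        fun a ha => hA a (List.mem_toFinset.mp ha),
        fun b hb => hB b (List.mem_toFinset.mp hb)⟩ with hp
      obtain ⟨c, hc⟩ := prodOf_perm (L := A) (L' := A.toFinset.sort (· ≤ ·)) Vg_mul_Vg
        (List.perm_of_nodup_nodup_toFinset_eq hnA (Finset.sort_nodup _ _)
          (by rw [Finset.sort_toFinset]))
      obtain ⟨d, hd⟩ := prodOf_perm (L := B) (L' := B.toFinset.sort (· ≤ ·)) Wg_mul_Wg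
        (List.perm_of_nodup_nodup_toFinset_eq hnB (Finset.sort_nodup _ _)
          (by rw [Finset.sort_toFinset]))
      rw [hc, hd, smul_mul_assoc, mul_smul_comm, smul_smul]
      exact Submodule.smul_mem _ _ (mono_mem_Jsub p)
    · rw [prodOf_eq_zero_of_not_nodup Wg_mul_Wg B hnB, mul_zero]
      exact Submodule.zero_mem _
  · rw [prodOf_eq_zero_of_not_nodup Vg_mul_Vg A hnA, zero_mul]
    exact Submodule.zero_mem _
lemma sort_pos (p : Sig) : ∀ a ∈ p.1.1.sort (· ≤ ·), 0 < (a : ℚ) :=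
  fun a ha => p.2.1 a ((Finset.mem_sort _).mp ha)

lemma sort_neg (p : Sig) : ∀ b ∈ p.1.2.sort (· ≤ ·), (b : ℚ) < 0 :=
  fun b hb => p.2.2 b ((Finset.mem_sort _).mp hb)

lemma Vg_mul_mono (a : ↥HalfInt) (p : Sig) : Vg a * mono p ∈ Jsub := by
  rcases halfInt_pos_or_neg a with ha | ha
  · rw [mono, ← mul_assoc, ← prodOf_cons]
    refine normK _ _ (fun b hb => ?_) (sort_neg p)
    rcases List.mem_cons.mp hb with rfl | hb
    · exact ha
    · exact sort_pos p b hb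
  · have swapA := mul_prodOf_swap Vg_mul_Vg (p.1.1.sort (· ≤ ·)) a
    have hk := cross_mem (P := fun b => (b : ℚ) < 0) Vg_mul_Wg
      (p.1.2.sort (· ≤ ·)) (sort_neg p) a
    have e : Vg a * mono p = ((-1:ℂ) ^ (p.1.1.sort (· ≤ ·)).length) •
        (prodOf Vg (p.1.1.sort (· ≤ ·)) * (Vg a * prodOf Wg (p.1.2.sort (· ≤ ·)))) := by
      rw [mono, ← mul_assoc, swapA, smul_mul_assoc, mul_assoc]
    rw [e]
    refine Submodule.smul_mem _ _ ?_
    have e2 : prodOf Vg (p.1.1.sort (· ≤ ·)) * (Vg a * prodOf Wg (p.1.2.sort (· ≤ ·)))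
        = prodOf Vg (p.1.1.sort (· ≤ ·)) *
            (Vg a * prodOf Wg (p.1.2.sort (· ≤ ·))
              - ((-1:ℂ) ^ (p.1.2.sort (· ≤ ·)).length) • (prodOf Wg (p.1.2.sort (· ≤ ·)) * Vg a))
          + ((-1:ℂ) ^ (p.1.2.sort (· ≤ ·)).length) •
            (prodOf Vg (p.1.1.sort (· ≤ ·)) * (prodOf Wg (p.1.2.sort (· ≤ ·)) * Vg a)) := by
      rw [mul_sub, mul_smul_comm]
      abel
    rw [e2]
    refine add_mem ?_ (Submodule.smul_mem _ _
      (Isub_le_Jsub (mul_mem_Isub _ (mul_mem_Isub _ (Vg_mem_Isub ha)))))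
    refine mul_span_mem hk ?_
    rintro s ⟨L, hL, rfl⟩
    exact normK _ _ (sort_pos p) hL

lemma Wg_mul_mono (a : ↥HalfInt) (p : Sig) : Wg a * mono p ∈ Jsub := by
  have hk := cross_mem (P := fun b => 0 < (b : ℚ)) Wg_mul_Vg
    (p.1.1.sort (· ≤ ·)) (sort_pos p) a
  have e : Wg a * mono p
      = (Wg a * prodOf Vg (p.1.1.sort (· ≤ ·))
          - ((-1:ℂ) ^ (p.1.1.sort (· ≤ ·)).length) • (prodOf Vg (p.1.1.sort (· ≤ ·)) * Wg a))
          * prodOf Wg (p.1.2.sort (· ≤ ·))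
        + ((-1:ℂ) ^ (p.1.1.sort (· ≤ ·)).length) •
          (prodOf Vg (p.1.1.sort (· ≤ ·)) * (Wg a * prodOf Wg (p.1.2.sort (· ≤ ·)))) := by
    rw [sub_mul, smul_mul_assoc, mul_assoc (prodOf Vg (p.1.1.sort (· ≤ ·))), mono, ← mul_assoc]
    abel
  rw [e]
  refine add_mem ?_ ?_
  · refine span_mul_mem hk ?_
    rintro s ⟨L, hL, rfl⟩
    exact normK _ _ hL (sort_neg p)
  · refine Submodule.smul_mem _ _ ?_
    rcases halfInt_pos_or_neg a with ha | ha
    · rw [mul_prodOf_swap Wg_mul_Wg, mul_smul_comm, ← mul_assoc]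
      exact Submodule.smul_mem _ _ (Isub_le_Jsub (mul_mem_Isub _ (Wg_mem_Isub ha)))
    · rw [← prodOf_cons]
      refine normK _ _ (sort_pos p) (fun b hb => ?_)
      rcases List.mem_cons.mp hb with rfl | hb
      · exact ha
      · exact sort_neg p b hb

lemma Vg_mul_Jsub (a : ↥HalfInt) {y : Cl} (hy : y ∈ Jsub) : Vg a * y ∈ Jsub := by
  rcases Submodule.mem_sup.mp hy with ⟨i, hi, k, hk, rfl⟩
  rw [mul_add]
  refine add_mem (Isub_le_Jsub (mul_mem_Isub _ hi)) ?_
  refine mul_span_mem hk ?_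
  rintro s ⟨p, rfl⟩
  exact Vg_mul_mono a p

lemma Wg_mul_Jsub (a : ↥HalfInt) {y : Cl} (hy : y ∈ Jsub) : Wg a * y ∈ Jsub := by
  rcases Submodule.mem_sup.mp hy with ⟨i, hi, k, hk, rfl⟩
  rw [mul_add]
  refine add_mem (Isub_le_Jsub (mul_mem_Isub _ hi)) ?_
  refine mul_span_mem hk ?_
  rintro s ⟨p, rfl⟩
  exact Wg_mul_mono a p

lemma mul_mem_Jsub (x : Cl) : ∀ y ∈ Jsub, x * y ∈ Jsub := by
  induction x using CliffordAlgebra.induction with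
  | algebraMap r =>
    intro y hy
    rw [Algebra.algebraMap_eq_smul_one, smul_mul_assoc, one_mul]
    exact Submodule.smul_mem _ _ hy
  | ι m =>
    intro y hy
    obtain ⟨mv, mw⟩ := m
    have hsplit : CliffordAlgebra.ι Qform (mv, mw)
        = CliffordAlgebra.ι Qform (mv, 0) + CliffordAlgebra.ι Qform (0, mw) := by
      rw [← map_add, Prod.mk_add_mk, add_zero, zero_add]
    rw [hsplit, add_mul]
    refine add_mem ?_ ?_
    · clear hsplit
      induction mv using Finsupp.induction_linear with
      | zero =>
        rw [show ((0 : Vsp), (0 : Wsp)) = 0 from rfl, map_zero, zero_mul]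
        exact Submodule.zero_mem _
      | add f g hf hg =>
        rw [show ((f + g : Vsp), (0 : Wsp)) = (f, 0) + (g, 0) by rw [Prod.mk_add_mk, add_zero],
          map_add, add_mul]
        exact add_mem hf hg
      | single b c =>
        rw [show ((Finsupp.single b c : Vsp), (0 : Wsp)) = c • ((Finsupp.single b 1 : Vsp), 0) by
            rw [Prod.smul_mk, Finsupp.smul_single, smul_eq_mul, mul_one, smul_zero],
          map_smul, smul_mul_assoc]
        exact Submodule.smul_mem _ _ (Vg_mul_Jsub b hy)
    · clear hsplit
      induction mw using Finsupp.induction_linear with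
      | zero =>
        rw [show ((0 : Vsp), (0 : Wsp)) = 0 from rfl, map_zero, zero_mul]
        exact Submodule.zero_mem _
      | add f g hf hg =>
        rw [show ((0 : Vsp), (f + g : Wsp)) = ((0 : Vsp), f) + ((0 : Vsp), g) by
            rw [Prod.mk_add_mk, add_zero], map_add, add_mul]
        exact add_mem hf hg
      | single b c =>
        rw [show ((0 : Vsp), (Finsupp.single b c : Wsp)) = c • ((0 : Vsp), (Finsupp.single b 1 : Wsp)) by
            rw [Prod.smul_mk, Finsupp.smul_single, smul_eq_mul, mul_one, smul_zero],
          map_smul, smul_mul_assoc]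
        exact Submodule.smul_mem _ _ (Wg_mul_Jsub b hy)
  | mul a b iha ihb =>
    intro y hy
    rw [mul_assoc]
    exact iha _ (ihb _ hy)
  | add a b iha ihb =>
    intro y hy
    rw [add_mul]
    exact add_mem (iha y hy) (ihb y hy)

lemma one_mem_Jsub : (1 : Cl) ∈ Jsub := by
  have h : mono ⟨(∅, ∅), fun a ha => absurd ha (Finset.notMem_empty a),
      fun b hb => absurd hb (Finset.notMem_empty b)⟩ = 1 := by
    unfold mono
    show prodOf Vg (Finset.sort ∅ (· ≤ ·)) * prodOf Wg (Finset.sort ∅ (· ≤ ·)) = 1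
    rw [Finset.sort_empty, prodOf_nil Vg, prodOf_nil Wg, one_mul]
  exact h ▸ mono_mem_Jsub _

lemma mem_Jsub (x : Cl) : x ∈ Jsub := by
  have := mul_mem_Jsub x 1 one_mem_Jsub
  rwa [mul_one] at this
lemma maya_eq_of_carrier {M N : Maya} (h : M.carrier = N.carrier) : M = N := by
  cases M; cases N; simpa using h

section final
variable (ρ : CliffordAlgebra Qform →ₐ[ℂ] Module.End ℂ Fock)
  (hv : ∀ a : ↥HalfInt,
      ρ (CliffordAlgebra.ι Qform (Finsupp.single a 1, 0)) = creation a)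
  (hw : ∀ a : ↥HalfInt,
      ρ (CliffordAlgebra.ι Qform (0, Finsupp.single a 1)) = annihilation a)

lemma actVac_mul (x y : Cl) : actVac ρ (x * y) = ρ x (actVac ρ y) := by
  rw [actVac_apply, actVac_apply, map_mul]
  rfl

include hv hw in
lemma span_Igen_sub_ker {x : Cl} (hx : x ∈ Submodule.span Cl Igen) : actVac ρ x = 0 := by
  induction hx using Submodule.span_induction with
  | mem s hs =>
    rcases hs with ⟨i, hi, rfl⟩ | ⟨j, hj, rfl⟩
    · rw [actVac_apply, hv i, vacuum, creation_single, if_pos (show (i:ℚ) ∈ mayaVac.carrier from ⟨i.2, hi⟩)]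
    · rw [actVac_apply, hw j, vacuum, annihilation_single,
        if_neg (show (j:ℚ) ∉ mayaVac.carrier from fun h => absurd hj (not_lt.mpr h.2.le))]
  | zero => simp
  | add a b _ _ ha hb => rw [map_add, ha, hb, add_zero]
  | smul c a _ ha =>
    rw [show c • a = c * a from rfl, actVac_mul, ha, map_zero]

include hv hw in
lemma indep (c : Sig →₀ ℂ) (h : actVac ρ (c.sum fun p r => r • mono p) = 0) : c = 0 := by
  choose ε hε N hN hact using actVac_mono ρ hv hw
  have hsum : actVac ρ (c.sum fun p r => r • mono p)
      = ∑ p ∈ c.support, (c p * ε p) • Finsupp.single (N p) 1 := by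
    rw [Finsupp.sum, map_sum]
    refine Finset.sum_congr rfl fun p _ => ?_
    rw [map_smul, hact, smul_smul]
  rw [hsum] at h
  ext p₀
  rw [Finsupp.coe_zero, Pi.zero_apply]
  by_cases hp₀ : p₀ ∈ c.support
  · have h2 : (∑ p ∈ c.support, (c p * ε p) • Finsupp.single (N p) (1:ℂ)) (N p₀) = 0 := by
      rw [h]; rfl
    rw [Finset.sum_apply'] at h2
    have key : ∀ p ∈ c.support, p ≠ p₀ →
        ((c p * ε p) • Finsupp.single (N p) (1:ℂ)) (N p₀) = 0 := by
      intro p _ hne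
      have hNe : N p ≠ N p₀ := by
        intro hEq
        refine hne (Mcar_injective ?_)
        rw [← hN p, ← hN p₀]
        exact congrArg Maya.carrier hEq
      rw [Finsupp.smul_apply, Finsupp.single_apply, if_neg hNe, smul_zero]
    rw [Finset.sum_eq_single_of_mem p₀ hp₀ key, Finsupp.smul_apply, Finsupp.single_apply,
      if_pos rfl, smul_eq_mul, mul_one] at h2
    rcases mul_eq_zero.mp h2 with h3 | h3
    · exact h3
    · exact absurd h3 (hε p₀)
  · exact Finsupp.notMem_support_iff.mp hp₀

lemma exists_sig (M : Maya) : ∃ p : Sig, Mcar p = M.carrier := by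
  have hfinA : (M.carrier \ Hneg).Finite :=
    M.finite_symmDiff.subset (fun x hx => Set.mem_symmDiff.mpr (Or.inl ⟨hx.1, hx.2⟩))
  have hfinB : (Hneg \ M.carrier).Finite :=
    M.finite_symmDiff.subset (fun x hx => Set.mem_symmDiff.mpr (Or.inr ⟨hx.1, hx.2⟩))
  have hA' : (Subtype.val ⁻¹' (M.carrier \ Hneg) : Set ↥HalfInt).Finite :=
    hfinA.preimage (Set.injOn_of_injective Subtype.val_injective)
  have hB' : (Subtype.val ⁻¹' (Hneg \ M.carrier) : Set ↥HalfInt).Finite :=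
    hfinB.preimage (Set.injOn_of_injective Subtype.val_injective)
  refine ⟨⟨(hA'.toFinset, hB'.toFinset), fun a ha => ?_, fun b hb => ?_⟩, ?_⟩
  · rw [Set.Finite.mem_toFinset] at ha
    rcases halfInt_pos_or_neg a with h | h
    · exact h
    · exact absurd (⟨a.2, h⟩ : (a:ℚ) ∈ Hneg) ha.2
  · rw [Set.Finite.mem_toFinset] at hb
    exact hb.1.2
  · show (Hneg \ Subtype.val '' _) ∪ Subtype.val '' _ = M.carrier
    rw [Set.Finite.coe_toFinset, Set.Finite.coe_toFinset,
      Set.image_preimage_eq_inter_range, Set.image_preimage_eq_inter_range,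
      Subtype.range_coe,
      Set.inter_eq_left.mpr (fun x (hx : x ∈ Hneg \ M.carrier) => hx.1.1),
      Set.inter_eq_left.mpr (fun x (hx : x ∈ M.carrier \ Hneg) => M.subset_halfInt hx.1)]
    ext q
    simp only [Set.mem_union, Set.mem_diff]
    constructor
    · rintro (⟨h1, h2⟩ | ⟨h1, _⟩)
      · by_contra hq
        exact h2 ⟨h1, hq⟩
      · exact h1
    · intro hq
      by_cases hn : q ∈ Hneg
      · exact Or.inl ⟨hn, fun h => h.2 hq⟩
      · exact Or.inr ⟨hq, hn⟩

include hv hw in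
lemma single_mem_range (M : Maya) (z : ℂ) :
    Finsupp.single M z ∈ LinearMap.range (actVac ρ) := by
  obtain ⟨p, hp⟩ := exists_sig M
  obtain ⟨ε, hε, N, hN, hact⟩ := actVac_mono ρ hv hw p
  have hNM : N = M := maya_eq_of_carrier (by rw [hN, hp])
  refine ⟨(z * ε⁻¹) • mono p, ?_⟩
  rw [map_smul, hact, smul_smul, mul_assoc, inv_mul_cancel₀ hε, mul_one, hNM,
    Finsupp.smul_single', mul_one]

include hv hw in
lemma actVac_surj : Function.Surjective (actVac ρ) := by
  intro y
  have hy : y ∈ LinearMap.range (actVac ρ) := by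
    rw [← Finsupp.sum_single y]
    exact Submodule.sum_mem _ (fun M _ => single_mem_range ρ hv hw M (y M))
  exact hy

end final
/-- for the Clifford action `ρ` on the Fock space, the kernel of
`x ↦ ρ(x)|0⟩` is the left ideal of `Cl(V ⊕ W)` generated by the elements
`ι(v_i ⊕ 0)`, `i ∈ H⁻`, and `ι(0 ⊕ w_j)`, `j ∈ H⁺`; moreover the map is
surjective, so `F` is the module induced from the trivial module of the
subalgebra generated by `{v_i : i ∈ H⁻} ∪ {w_j : j ∈ H⁺}`. -/
theorem kernel_of_vacuum_action (ρ : CliffordAlgebra Qform →ₐ[ℂ] Module.End ℂ Fock)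
    (hv : ∀ a : ↥HalfInt,
      ρ (CliffordAlgebra.ι Qform (Finsupp.single a 1, 0)) = creation a)
    (hw : ∀ a : ↥HalfInt,
      ρ (CliffordAlgebra.ι Qform (0, Finsupp.single a 1)) = annihilation a) :
    (LinearMap.ker (actVac ρ) : Set (CliffordAlgebra Qform)) =
      (Submodule.span (CliffordAlgebra Qform)
        ({x | ∃ i : ↥HalfInt, (i : ℚ) < 0 ∧
            x = CliffordAlgebra.ι Qform (Finsupp.single i 1, 0)} ∪
         {x | ∃ j : ↥HalfInt, 0 < (j : ℚ) ∧
            x = CliffordAlgebra.ι Qform (0, Finsupp.single j 1)}) :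
          Set (CliffordAlgebra Qform)) ∧
    Function.Surjective (actVac ρ) := by
  constructor
  · ext x
    simp only [SetLike.mem_coe, LinearMap.mem_ker]
    constructor
    · intro hx
      rcases Submodule.mem_sup.mp (mem_Jsub x) with ⟨i, hi, k, hk, rfl⟩
      have hi' : i ∈ Submodule.span (CliffordAlgebra Qform) Igen := hi
      have hik : actVac ρ i = 0 := span_Igen_sub_ker ρ hv hw hi'
      rw [map_add, hik, zero_add] at hx
      obtain ⟨c, hc⟩ := Finsupp.mem_span_range_iff_exists_finsupp.mp hk
      have hc0 : c = 0 := indep ρ hv hw c (by rw [hc]; exact hx)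
      have hk0 : k = 0 := by rw [← hc, hc0, Finsupp.sum_zero_index]
      rw [hk0, add_zero]
      exact hi'
    · intro hx
      exact span_Igen_sub_ker ρ hv hw hx
  · exact actVac_surj ρ hv hw
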